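/- Let Σ ⊆ X and let δ, μ, ε̃ > 0 satisfy ε̃ ≤ δ ≤ μ²/2. Assume that for every f ∈ K there is g ∈ Σ ∩ K with ‖f − g‖_X ≤ δ. Let f ∈ K and w := λ(f). Suppose f̃ = ι(h̃) with h̃ ∈ Y and ι(h̃) ∈ Σ is an ε̃-approximate minimizer of the loss: ‖λ(ι(h̃)) − w‖ + μ‖h̃‖_Y ≤ ‖λ(ι(h)) − w‖ + μ‖h‖_Y + ε̃ for every h ∈ Y with ι(h) ∈ Σ. Then, with ε := μ·max(C₀, 1+μ), one has ‖f − f̃‖_X ≤ ε + 2 R(K(w, 2ε))_X. -/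

import Mathlib

/-- Chebyshev radius of a set `S` in a normed space `X`:
`R(S) = inf_{z ∈ X} sup_{f ∈ S} ‖f - z‖`. -/
noncomputable def chebRad {X : Type*} [NormedAddCommGroup X] (S : Set X) : ℝ :=
  ⨅ z : X, ⨆ f : S, ‖(f : X) - z‖

/-- Weighted euclidean norm on `ℝ^m`: `‖v‖ = ( m⁻¹ ∑ v_j² )^{1/2}`. -/
noncomputable def wNorm {m : ℕ} (v : Fin m → ℝ) : ℝ :=
  Real.sqrt ((∑ j, v j ^ 2) / m)

lemma wNorm_nonneg {m : ℕ} (v : Fin m → ℝ) : 0 ≤ wNorm v := Real.sqrt_nonneg _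

lemma wNorm_eq {m : ℕ} (v : Fin m → ℝ) :
    wNorm v = ‖(WithLp.equiv 2 (Fin m → ℝ)).symm v‖ / Real.sqrt m := by
  rw [wNorm, Real.sqrt_div (by positivity), EuclideanSpace.norm_eq]
  congr 2
  refine Finset.sum_congr rfl fun j _ => ?_
  simp [WithLp.equiv_symm_apply, sq_abs]

lemma wNorm_le {m : ℕ} (hm : 0 < m) {v : Fin m → ℝ} {c : ℝ} (hc : 0 ≤ c)
    (h : ∀ j, |v j| ≤ c) : wNorm v ≤ c := by
  rw [wNorm, show c = Real.sqrt (c ^ 2) from (Real.sqrt_sq hc).symm]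
  apply Real.sqrt_le_sqrt
  rw [div_le_iff₀ (by exact_mod_cast hm)]
  calc (∑ j, v j ^ 2) ≤ ∑ _j : Fin m, c ^ 2 := by
        refine Finset.sum_le_sum fun j _ => ?_
        rw [← sq_abs]
        exact pow_le_pow_left₀ (abs_nonneg _) (h j) 2
    _ = c ^ 2 * m := by simp [Finset.card_univ]; ring

lemma wNorm_add_le {m : ℕ} (a b : Fin m → ℝ) :
    wNorm (fun j => a j + b j) ≤ wNorm a + wNorm b := by
  rw [wNorm_eq, wNorm_eq, wNorm_eq, ← add_div]
  apply div_le_div_of_nonneg_right ?h (by positivity) |>.trans_eq rfl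
  case h =>
    have : (WithLp.equiv 2 (Fin m → ℝ)).symm (fun j => a j + b j) =
        (WithLp.equiv 2 (Fin m → ℝ)).symm a + (WithLp.equiv 2 (Fin m → ℝ)).symm b := rfl
    rw [this]
    exact norm_add_le _ _

/-- Near optimality of an `ε̃`-approximate minimizer of the penalized loss
`g ↦ ‖λ(g) − w‖ + μ‖g‖_Y` over `Σ`, for the model class `K = ι(U(Y))`,
with `ε̃ ≤ δ ≤ μ²/2`:  with `ε := μ·max(C₀, 1+μ)` one has
`‖f − f̃‖_X ≤ ε + 2 R(K(w, 2ε))`. -/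
theorem stmt_4
    {X Y : Type*} [NormedAddCommGroup X] [NormedSpace ℝ X] [CompleteSpace X]
    [NormedAddCommGroup Y] [NormedSpace ℝ Y]
    {m : ℕ} (hm : 0 < m)
    (lam : Fin m → X →L[ℝ] ℝ) (hlam : ∀ j, ‖lam j‖ ≤ 1)
    (ι : Y →ₗ[ℝ] X) (hι : Function.Injective ι)
    (C₀ : ℝ) (hC₀ : ∀ g : Y, ‖ι g‖ ≤ C₀ * ‖g‖)
    (hK : IsCompact (ι '' {g : Y | ‖g‖ ≤ 1}))
    (Sig : Set X) (δ μ εt : ℝ) (hδ : 0 < δ) (hμ : 0 < μ) (hεt : 0 < εt)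
    (hεtδ : εt ≤ δ) (hδμ : δ ≤ μ ^ 2 / 2)
    (happrox : ∀ f ∈ ι '' {g : Y | ‖g‖ ≤ 1},
      ∃ g ∈ Sig ∩ ι '' {g : Y | ‖g‖ ≤ 1}, ‖f - g‖ ≤ δ)
    (f : X) (hf : f ∈ ι '' {g : Y | ‖g‖ ≤ 1})
    (ftil : Y) (hftil : ι ftil ∈ Sig)
    (hmin : ∀ h : Y, ι h ∈ Sig →
      wNorm (fun j => lam j (ι ftil) - lam j f) + μ * ‖ftil‖ ≤
        wNorm (fun j => lam j (ι h) - lam j f) + μ * ‖h‖ + εt) :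
    ‖f - ι ftil‖ ≤ μ * max C₀ (1 + μ) +
      2 * chebRad {u ∈ ι '' {g : Y | ‖g‖ ≤ 1} |
        wNorm (fun j => lam j u - lam j f) ≤ 2 * (μ * max C₀ (1 + μ))} := by
  set ε := μ * max C₀ (1 + μ) with hεdef
  have hεpos : 0 < ε := mul_pos hμ (lt_of_lt_of_le (by linarith) (le_max_right _ _))
  have hμε : μ * (1 + μ) ≤ ε := by
    apply mul_le_mul_of_nonneg_left (le_max_right _ _) hμ.le
  have hwle : ∀ g h : X, wNorm (fun j => lam j g - lam j h) ≤ ‖g - h‖ := by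
    intro g h
    refine wNorm_le hm (norm_nonneg _) fun j => ?_
    rw [← map_sub]
    calc |lam j (g - h)| = ‖lam j (g - h)‖ := (Real.norm_eq_abs _).symm
      _ ≤ ‖lam j‖ * ‖g - h‖ := (lam j).le_opNorm _
      _ ≤ 1 * ‖g - h‖ := mul_le_mul_of_nonneg_right (hlam j) (norm_nonneg _)
      _ = ‖g - h‖ := one_mul _
  -- approximate f in Sig ∩ K
  obtain ⟨g, ⟨hgS, hgK⟩, hgδ⟩ := happrox f hf
  obtain ⟨h₀, hh₀, rfl⟩ := hgK
  have hminh := hmin h₀ hgS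
  have hw0 : wNorm (fun j => lam j (ι h₀) - lam j f) ≤ δ := by
    refine (hwle (ι h₀) f).trans ?_
    rw [norm_sub_rev]; exact hgδ
  have hμh₀ : μ * ‖h₀‖ ≤ μ * 1 := mul_le_mul_of_nonneg_left hh₀ hμ.le
  have h1 : wNorm (fun j => lam j (ι ftil) - lam j f) + μ * ‖ftil‖ ≤ μ ^ 2 + μ := by
    linarith
  have hA : wNorm (fun j => lam j (ι ftil) - lam j f) ≤ ε := by
    have := mul_nonneg hμ.le (norm_nonneg ftil)
    nlinarith
  have hftil_norm : ‖ftil‖ ≤ 1 + μ := by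
    have h2 : μ * ‖ftil‖ ≤ μ * (1 + μ) := by
      have := wNorm_nonneg (fun j => lam j (ι ftil) - lam j f)
      nlinarith
    exact le_of_mul_le_mul_left h2 hμ
  -- projection to the unit ball
  set t : ℝ := max 1 ‖ftil‖ with htdef
  have ht1 : (1:ℝ) ≤ t := le_max_left _ _
  have htpos : (0:ℝ) < t := lt_of_lt_of_le one_pos ht1
  set h' : Y := t⁻¹ • ftil with hh'def
  have hh'K : ι h' ∈ ι '' {g : Y | ‖g‖ ≤ 1} := by
    refine ⟨h', ?_, rfl⟩
    have hft : ‖ftil‖ ≤ t := le_max_right _ _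
    have : ‖h'‖ = t⁻¹ * ‖ftil‖ := by
      rw [hh'def, norm_smul, Real.norm_eq_abs, abs_of_pos (inv_pos.mpr htpos)]
    rw [Set.mem_setOf_eq, this]
    calc t⁻¹ * ‖ftil‖ ≤ t⁻¹ * t := mul_le_mul_of_nonneg_left hft (inv_pos.mpr htpos).le
      _ = 1 := inv_mul_cancel₀ htpos.ne'
  have hdist : ‖ι ftil - ι h'‖ ≤ ε := by
    by_cases hcase : ‖ftil‖ ≤ 1
    · have ht : t = 1 := max_eq_left hcase
      have : h' = ftil := by rw [hh'def, ht]; simp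
      rw [this]; simp [hεpos.le]
    · push_neg at hcase
      have hftne : ftil ≠ 0 := by
        intro h; rw [h, norm_zero] at hcase; linarith
      have hC₀pos : 0 < C₀ := by
        have h1' : 0 < ‖ι ftil‖ := by
          rw [norm_pos_iff]
          intro h
          exact hftne (hι (by simpa using h))
        have h2' := hC₀ ftil
        have h3' : 0 < ‖ftil‖ := by linarith
        nlinarith
      have htval : t = ‖ftil‖ := max_eq_right hcase.le
      have heq : ι ftil - ι h' = ι ((1 - t⁻¹) • ftil) := by
        rw [hh'def, sub_smul, one_smul, map_sub]
      rw [heq]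
      calc ‖ι ((1 - t⁻¹) • ftil)‖ ≤ C₀ * ‖(1 - t⁻¹) • ftil‖ := hC₀ _
        _ = C₀ * ((1 - t⁻¹) * ‖ftil‖) := by
            rw [norm_smul, Real.norm_eq_abs, abs_of_nonneg]
            have : t⁻¹ ≤ 1 := by
              rw [inv_le_one_iff₀]; right; exact ht1
            linarith
        _ = C₀ * (‖ftil‖ - 1) := by
            rw [htval]
            field_simp
        _ ≤ C₀ * μ := by
            apply mul_le_mul_of_nonneg_left _ hC₀pos.le
            linarith
        _ = μ * C₀ := mul_comm _ _
        _ ≤ ε := mul_le_mul_of_nonneg_left (le_max_left _ _) hμ.le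
  have hf'S : wNorm (fun j => lam j (ι h') - lam j f) ≤ 2 * ε := by
    have tri := wNorm_add_le (fun j => lam j (ι h') - lam j (ι ftil))
      (fun j => lam j (ι ftil) - lam j f)
    have heq : (fun j => lam j (ι h') - lam j f) =
        fun j => (lam j (ι h') - lam j (ι ftil)) + (lam j (ι ftil) - lam j f) := by
      funext j; ring
    rw [heq]
    have h2 : wNorm (fun j => lam j (ι h') - lam j (ι ftil)) ≤ ε := by
      refine (hwle _ _).trans ?_
      rw [norm_sub_rev]; exact hdist
    linarith
  set S := {u ∈ ι '' {g : Y | ‖g‖ ≤ 1} |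
    wNorm (fun j => lam j u - lam j f) ≤ 2 * ε} with hSdef
  have hfS : f ∈ S := by
    refine ⟨hf, ?_⟩
    have : wNorm (fun j => lam j f - lam j f) = 0 := by
      simp [wNorm]
    rw [this]; positivity
  have hf'mem : ι h' ∈ S := ⟨hh'K, hf'S⟩
  obtain ⟨r, hr⟩ : ∃ r, ∀ x ∈ ι '' {g : Y | ‖g‖ ≤ 1}, ‖x‖ ≤ r :=
    hK.isBounded.exists_norm_le
  have key : ∀ z : X, ‖f - ι ftil‖ ≤ ε + 2 * ⨆ u : S, ‖(u : X) - z‖ := by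
    intro z
    have hbdd : BddAbove (Set.range fun u : S => ‖(u : X) - z‖) := by
      refine ⟨r + ‖z‖, ?_⟩
      rintro x ⟨u, rfl⟩
      calc ‖(u : X) - z‖ ≤ ‖(u : X)‖ + ‖z‖ := norm_sub_le _ _
        _ ≤ r + ‖z‖ := by
            have := hr _ u.2.1
            linarith
    have h1' : ‖f - z‖ ≤ ⨆ u : S, ‖(u : X) - z‖ := le_ciSup hbdd ⟨f, hfS⟩
    have h2' : ‖ι h' - z‖ ≤ ⨆ u : S, ‖(u : X) - z‖ := le_ciSup hbdd ⟨ι h', hf'mem⟩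
    have htri : ‖f - ι ftil‖ ≤ ‖f - z‖ + ‖z - ι h'‖ + ‖ι h' - ι ftil‖ := by
      have : f - ι ftil = (f - z) + (z - ι h') + (ι h' - ι ftil) := by abel
      rw [this]
      exact norm_add₃_le
    have hz : ‖z - ι h'‖ = ‖ι h' - z‖ := norm_sub_rev _ _
    have hd : ‖ι h' - ι ftil‖ ≤ ε := by rw [norm_sub_rev]; exact hdist
    linarith
  have hcheb : (‖f - ι ftil‖ - ε) / 2 ≤ chebRad S := by
    rw [chebRad]
    refine le_ciInf fun z => ?_
    have := key z
    linarith
  linarith
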